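/- Let K be a twisted subgroup of a finite group G with G = ⟨K⟩, and suppose there exists an automorphism σ of G with k^σ = k⁻¹ for all k ∈ K. Then Ξ_K(G) = {g ∈ G : g ≡ 1} is trivial. -/
import Mathlib


/-- A subset `K` of a group is a twisted subgroup if `1 ∈ K`, `x⁻¹ ∈ K` for all
`x ∈ K`, and `x*y*x ∈ K` for all `x, y ∈ K`. -/
def IsTwistedSubgroup {G : Type*} [Group G] (K : Set G) : Prop :=
  (1 : G) ∈ K ∧ (∀ x ∈ K, x⁻¹ ∈ K) ∧ (∀ x ∈ K, ∀ y ∈ K, x * y * x ∈ K)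

/-- The relation `≡` determined by `K`: `g ≡ h` iff there are `k₁, …, kₙ ∈ K`
with `g = k₁ k₂ ⋯ kₙ` and `h = k₁⁻¹ k₂⁻¹ ⋯ kₙ⁻¹`. -/
def TwistedEquiv {G : Type*} [Group G] (K : Set G) (g h : G) : Prop :=
  ∃ l : List G, (∀ x ∈ l, x ∈ K) ∧ g = l.prod ∧ h = (l.map (·⁻¹)).prod

/-- If `K` is a twisted subgroup generating the finite group `G`
and some automorphism `σ` of `G` inverts every element of `K`, then
`Ξ_K(G) = {g : g ≡ 1}` is trivial. -/
theorem xi_trivial_of_inverting_automorphism {G : Type*} [Group G] [Finite G]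
    (K : Set G) (hK : IsTwistedSubgroup K)
    (hgen : Subgroup.closure K = ⊤)
    (σ : G ≃* G) (hσ : ∀ k ∈ K, σ k = k⁻¹) :
    {g : G | TwistedEquiv K g 1} = {1} := by
  ext g
  simp only [Set.mem_setOf_eq, Set.mem_singleton_iff]
  constructor
  · rintro ⟨l, hl, hg, h1⟩
    have key : σ g = 1 := by
      rw [hg, map_list_prod]
      rw [show l.map σ = l.map (·⁻¹) from List.map_congr_left fun x hx => hσ x (hl x hx)]
      exact h1.symm
    have := map_one σ
    exact σ.injective (key.trans this.symm)
  · rintro rfl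
    exact ⟨[], by simp, by simp, by simp⟩
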